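/- Let f, c_1,…,c_m : ℝⁿ → ℝ be differentiable with ∇f (L,κ)-Hölder continuous and each ∇c_i (L_i,κ_i)-Hölder continuous, and let r : ℝⁿ → ℝ be convex. Fix x ∈ ℝⁿ with c_i(x) ≤ 0 for all i, constants δ, δ', M, M_1,…,M_m > 0, and assume: (i) with I(x) := {i : c_i(x) ≥ −δ}, the matrix J_{I(x)}(x) whose rows are ∇c_i(x)ᵀ for i ∈ I(x) has smallest singular value σ_min(J_{I(x)}(x)) ≥ δ'; (ii) ‖∇c_i(x)‖ ≤ M_i for all i. Suppose z* ∈ ℝⁿ, λ ∈ ℝ^m_{≥0} and l ∈ ∂r(z*) satisfy, with d = z* − x: ∇f(x) + l + 2L‖d‖^{κ−1}d + Σ_{i=1}^m λ_i(∇c_i(x) + L_i‖d‖^{κ_i−1}d) = 0, c_i(x) + ∇c_i(x)ᵀd + (L_i/(κ_i+1))‖d‖^{κ_i+1} ≤ 0 and λ_i·(c_i(x) + ∇c_i(x)ᵀd + (L_i/(κ_i+1))‖d‖^{κ_i+1}) = 0 for all i, and ‖∇f(x) + l‖ ≤ M. If ‖d‖ ≤ ρ for some ρ > 0 with max_{i∈[m]}{M_iρ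 + (L_i/(κ_i+1))ρ^{κ_i+1}} ≤ δ and Σ_{j=1}^m L_jρ^{κ_j} ≤ δ'/2, then λ_i = 0 for every i ∉ I(x) and ‖λ‖_∞ ≤ 2(M + 2Lρ^κ)/δ'. -/

import Mathlib

open scoped RealInnerProductSpace
open Real Set

/-- The convex subdifferential of `r` at `u`. -/
def subgrad {n : ℕ} (r : EuclideanSpace ℝ (Fin n) → ℝ)
    (u : EuclideanSpace ℝ (Fin n)) : Set (EuclideanSpace ℝ (Fin n)) :=
  {l | ∀ z, r u + ⟪l, z - u⟫ ≤ r z}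

/-- (Proposition 2 in the paper.) Under gradient Hölder continuity,
a uniform LICQ-type condition on the near-active constraint gradients implies that the
multipliers of the surrogate subproblem vanish on inactive constraints and are bounded
by `2(M + 2Lρ^κ)/δ'`.  The smallest-singular-value condition on the matrix whose rows
are `∇cᵢ(x)ᵀ`, `i ∈ I(x) = {i : cᵢ(x) ≥ −δ}`, is expressed as
`δ'‖u‖ ≤ ‖Σᵢ uᵢ ∇cᵢ(x)‖` for every vector `u` supported on `I(x)`. -/
theorem gen_licq_dual_bound {n m : ℕ}
    (f r : EuclideanSpace ℝ (Fin n) → ℝ)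
    (c : Fin m → EuclideanSpace ℝ (Fin n) → ℝ)
    (f' : EuclideanSpace ℝ (Fin n) → EuclideanSpace ℝ (Fin n))
    (c' : Fin m → EuclideanSpace ℝ (Fin n) → EuclideanSpace ℝ (Fin n))
    (hf : ∀ x, HasGradientAt f (f' x) x)
    (hc : ∀ i x, HasGradientAt (c i) (c' i x) x)
    (hrconv : ConvexOn ℝ univ r)
    (L κ : ℝ) (Li κi : Fin m → ℝ)
    (hκ0 : 0 < κ) (hκ1 : κ ≤ 1) (hκi0 : ∀ i, 0 < κi i) (hκi1 : ∀ i, κi i ≤ 1)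
    (hL : 0 < L) (hLi : ∀ i, 0 < Li i)
    (hfholder : ∀ x y, ‖f' x - f' y‖ ≤ L * ‖x - y‖ ^ κ)
    (hcholder : ∀ i x y, ‖c' i x - c' i y‖ ≤ Li i * ‖x - y‖ ^ (κi i))
    -- the base point and the constants
    (x : EuclideanSpace ℝ (Fin n)) (hxfeas : ∀ i, c i x ≤ 0)
    (δ δ' M : ℝ) (Mi : Fin m → ℝ)
    (hδ : 0 < δ) (hδ' : 0 < δ') (hM : 0 < M) (hMi : ∀ i, 0 < Mi i)
    -- (i) σ_min of the matrix with rows ∇cᵢ(x)ᵀ, i ∈ I(x), is ≥ δ'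
    (hσ : ∀ u : EuclideanSpace ℝ (Fin m), (∀ i, c i x < -δ → u i = 0) →
      δ' * ‖u‖ ≤ ‖∑ i, u i • c' i x‖)
    -- (ii) gradient bounds
    (hgradbnd : ∀ i, ‖c' i x‖ ≤ Mi i)
    -- KKT data of the surrogate subproblem at `x`
    (zstar : EuclideanSpace ℝ (Fin n))
    (lam : Fin m → ℝ) (hlam : ∀ i, 0 ≤ lam i)
    (l : EuclideanSpace ℝ (Fin n)) (hl : l ∈ subgrad r zstar)
    (hstat : f' x + l + (2 * L * ‖zstar - x‖ ^ (κ - 1)) • (zstar - x) +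
      ∑ i, lam i • (c' i x + (Li i * ‖zstar - x‖ ^ (κi i - 1)) • (zstar - x)) = 0)
    (hconstr : ∀ i, c i x + ⟪c' i x, zstar - x⟫ +
      (Li i / (κi i + 1)) * ‖zstar - x‖ ^ (κi i + 1) ≤ 0)
    (hcomp : ∀ i, lam i * (c i x + ⟪c' i x, zstar - x⟫ +
      (Li i / (κi i + 1)) * ‖zstar - x‖ ^ (κi i + 1)) = 0)
    (hMbound : ‖f' x + l‖ ≤ M)
    -- smallness of the residual
    (ρ : ℝ) (hρ : 0 < ρ) (hd : ‖zstar - x‖ ≤ ρ)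
    (hρδ : ∀ i, Mi i * ρ + (Li i / (κi i + 1)) * ρ ^ (κi i + 1) ≤ δ)
    (hρδ' : ∑ j, Li j * ρ ^ (κi j) ≤ δ' / 2) :
    (∀ i, c i x < -δ → lam i = 0) ∧ ∀ i, lam i ≤ 2 * (M + 2 * L * ρ ^ κ) / δ' := by
  classical
  set d := zstar - x with hd_def
  have hD0 : (0:ℝ) ≤ ‖d‖ := norm_nonneg _
  have hρ0 : (0:ℝ) ≤ ρ := hρ.le
  -- key rpow identity
  have key : ∀ t : ℝ, 0 < t → ‖d‖ ^ (t - 1) * ‖d‖ = ‖d‖ ^ t := by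
    intro t ht
    rcases hD0.lt_or_eq with h | h
    · have h1 : ‖d‖ ^ (t-1) * ‖d‖ ^ (1:ℝ) = ‖d‖ ^ (t-1+1) := (Real.rpow_add h _ _).symm
      rw [Real.rpow_one] at h1
      rw [h1]; norm_num
    · rw [← h, Real.zero_rpow ht.ne', mul_zero]
  have part1 : ∀ i, c i x < -δ → lam i = 0 := by
    intro i hi
    have h1 : ⟪c' i x, d⟫ ≤ Mi i * ρ := by
      calc ⟪c' i x, d⟫ ≤ ‖c' i x‖ * ‖d‖ := real_inner_le_norm _ _
        _ ≤ Mi i * ρ := mul_le_mul (hgradbnd i) hd hD0 (hMi i).le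
    have h2 : (Li i / (κi i + 1)) * ‖d‖ ^ (κi i + 1)
        ≤ (Li i / (κi i + 1)) * ρ ^ (κi i + 1) := by
      have := hκi0 i; have := hLi i
      apply mul_le_mul_of_nonneg_left (Real.rpow_le_rpow hD0 hd (by positivity))
      positivity
    have hneg : c i x + ⟪c' i x, d⟫ + (Li i / (κi i + 1)) * ‖d‖ ^ (κi i + 1) < 0 := by
      have := hρδ i; linarith
    rcases mul_eq_zero.mp (hcomp i) with h | h
    · exact h
    · exact absurd h hneg.ne
  refine ⟨part1, ?_⟩
  set u : EuclideanSpace ℝ (Fin m) := WithLp.toLp 2 (fun i => lam i) with hu_def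
  have hui : ∀ i, lam i ≤ ‖u‖ := by
    intro i
    have h1 : |lam i| = |⟪EuclideanSpace.single i (1:ℝ), u⟫| := by
      rw [EuclideanSpace.inner_single_left]; simp [hu_def]
    calc lam i ≤ |lam i| := le_abs_self _
      _ = |⟪EuclideanSpace.single i (1:ℝ), u⟫| := h1
      _ ≤ ‖EuclideanSpace.single i (1:ℝ)‖ * ‖u‖ := abs_real_inner_le_norm _ _
      _ = ‖u‖ := by rw [EuclideanSpace.norm_single]; simp
  have hX : ∑ i, lam i • c' i x
      = -((f' x + l) + (2 * L * ‖d‖ ^ (κ - 1)) • d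
          + ∑ i, (lam i * (Li i * ‖d‖ ^ (κi i - 1))) • d) := by
    rw [eq_neg_iff_add_eq_zero]
    have h2 := hstat
    simp only [smul_add, smul_smul, Finset.sum_add_distrib] at h2
    rw [← h2]; abel
  have hterm : ∀ i, ‖(lam i * (Li i * ‖d‖ ^ (κi i - 1))) • d‖
      ≤ ‖u‖ * (Li i * ρ ^ (κi i)) := by
    intro i
    have hnn : (0:ℝ) ≤ lam i * (Li i * ‖d‖ ^ (κi i - 1)) :=
      mul_nonneg (hlam i) (mul_nonneg (hLi i).le (Real.rpow_nonneg hD0 _))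
    rw [norm_smul, Real.norm_eq_abs, abs_of_nonneg hnn]
    have e1 : lam i * (Li i * ‖d‖ ^ (κi i - 1)) * ‖d‖ = lam i * (Li i * ‖d‖ ^ (κi i)) := by
      rw [mul_assoc, mul_assoc, key _ (hκi0 i)]
    rw [e1]
    have h3 : Li i * ‖d‖ ^ (κi i) ≤ Li i * ρ ^ (κi i) :=
      mul_le_mul_of_nonneg_left (Real.rpow_le_rpow hD0 hd (hκi0 i).le) (hLi i).le
    have h4 : (0:ℝ) ≤ Li i * ‖d‖ ^ (κi i) := mul_nonneg (hLi i).le (Real.rpow_nonneg hD0 _)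
    exact mul_le_mul (hui i) h3 h4 ((hlam i).trans (hui i))
  have hnorm1 : ‖∑ i, lam i • c' i x‖ ≤ M + 2 * L * ρ ^ κ + ‖u‖ * (δ' / 2) := by
    rw [hX, norm_neg]
    have hA : ‖(2 * L * ‖d‖ ^ (κ - 1)) • d‖ ≤ 2 * L * ρ ^ κ := by
      have hnn : (0:ℝ) ≤ 2 * L * ‖d‖ ^ (κ - 1) :=
        mul_nonneg (by linarith) (Real.rpow_nonneg hD0 _)
      rw [norm_smul, Real.norm_eq_abs, abs_of_nonneg hnn]
      have e1 : 2 * L * ‖d‖ ^ (κ - 1) * ‖d‖ = 2 * L * ‖d‖ ^ κ := by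
        rw [mul_assoc, key _ hκ0]
      rw [e1]
      exact mul_le_mul_of_nonneg_left (Real.rpow_le_rpow hD0 hd hκ0.le) (by linarith)
    have hB : ‖∑ i, (lam i * (Li i * ‖d‖ ^ (κi i - 1))) • d‖ ≤ ‖u‖ * (δ' / 2) := by
      calc ‖∑ i, (lam i * (Li i * ‖d‖ ^ (κi i - 1))) • d‖
          ≤ ∑ i, ‖(lam i * (Li i * ‖d‖ ^ (κi i - 1))) • d‖ := norm_sum_le _ _
        _ ≤ ∑ i, ‖u‖ * (Li i * ρ ^ (κi i)) := Finset.sum_le_sum fun i _ => hterm i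
        _ = ‖u‖ * ∑ i, Li i * ρ ^ (κi i) := by rw [Finset.mul_sum]
        _ ≤ ‖u‖ * (δ' / 2) := mul_le_mul_of_nonneg_left hρδ' (norm_nonneg u)
    calc ‖(f' x + l) + (2 * L * ‖d‖ ^ (κ - 1)) • d
          + ∑ i, (lam i * (Li i * ‖d‖ ^ (κi i - 1))) • d‖
        ≤ ‖f' x + l‖ + ‖(2 * L * ‖d‖ ^ (κ - 1)) • d‖
          + ‖∑ i, (lam i * (Li i * ‖d‖ ^ (κi i - 1))) • d‖ := norm_add₃_le
      _ ≤ M + 2 * L * ρ ^ κ + ‖u‖ * (δ' / 2) :=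
          add_le_add (add_le_add hMbound hA) hB
  have hσu : δ' * ‖u‖ ≤ ‖∑ i, lam i • c' i x‖ := hσ u part1
  have hmain : δ' * ‖u‖ ≤ M + 2 * L * ρ ^ κ + ‖u‖ * (δ' / 2) := hσu.trans hnorm1
  have hub : ‖u‖ ≤ 2 * (M + 2 * L * ρ ^ κ) / δ' := by
    rw [le_div_iff₀ hδ']
    nlinarith [norm_nonneg u]
  intro i
  exact (hui i).trans hub
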